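/- The β-dimensional quantization coefficient for P does not exist: the sequence n^{2/β} V_n has set of accumulation points (along n with 4^ℓ ≤ n < 2·4^ℓ) equal to a nondegenerate closed interval, hence lim_{n→∞} n^{2/β} V_n does not exist, where β = log 4 / log 3. -/

import Mathlib

open Filter Set

/-- The `β`-dimensional quantization coefficient does not exist (`β = log 4 / log 3`): the
sequence `n^{2/β} V_n` has a nondegenerate closed interval of accumulation points, hence it
has no limit. Assumes `V_n = (1/36^{ℓ+1})(13·4^ℓ − 4n)` for `4^ℓ ≤ n ≤ 2·4^ℓ`. -/
theorem stmt_18 (β : ℝ) (hβ : β = Real.log 4 / Real.log 3) (V : ℕ → ℝ)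
    (hV : ∀ ℓ n : ℕ, 4 ^ ℓ ≤ n → n ≤ 2 * 4 ^ ℓ →
      V n = (1 / 36 ^ (ℓ + 1)) * (13 * 4 ^ ℓ - 4 * (n : ℝ))) :
    (∃ a b : ℝ, a < b ∧ ∀ y ∈ Icc a b,
        MapClusterPt y atTop (fun n : ℕ => (n : ℝ) ^ ((2 : ℝ) / β) * V n)) ∧
      ¬ ∃ L : ℝ, Tendsto (fun n : ℕ => (n : ℝ) ^ ((2 : ℝ) / β) * V n) atTop (nhds L) := by
  set c : ℝ := 2 / β with hcdef
  set u : ℕ → ℝ := fun n : ℕ => (n : ℝ) ^ c * V n with hu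
  have hlog3 : Real.log 3 ≠ 0 := by
    have := Real.log_pos (by norm_num : (1:ℝ) < 3); linarith
  have hlog4 : Real.log 4 ≠ 0 := by
    have := Real.log_pos (by norm_num : (1:ℝ) < 4); linarith
  have hc : c = 2 * Real.log 3 / Real.log 4 := by
    rw [hcdef, hβ]; field_simp
  -- key rpow values
  have h4c : (4 : ℝ) ^ c = 9 := by
    rw [Real.rpow_def_of_pos (by norm_num : (0:ℝ) < 4), hc]
    have : Real.log 4 * (2 * Real.log 3 / Real.log 4) = Real.log 9 := by
      have h9 : Real.log 9 = 2 * Real.log 3 := by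
        rw [show (9:ℝ) = 3 ^ 2 by norm_num, Real.log_pow]; push_cast; ring
      field_simp [h9]; linarith
    rw [this, Real.exp_log (by norm_num)]
  have h2c : (2 : ℝ) ^ c = 3 := by
    rw [Real.rpow_def_of_pos (by norm_num : (0:ℝ) < 2), hc]
    have h4 : Real.log 4 = 2 * Real.log 2 := by
      rw [show (4:ℝ) = 2 ^ 2 by norm_num, Real.log_pow]; push_cast; ring
    have hlog2 : Real.log 2 ≠ 0 := by
      have := Real.log_pos (by norm_num : (1:ℝ) < 2); linarith
    have : Real.log 2 * (2 * Real.log 3 / Real.log 4) = Real.log 3 := by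
      rw [h4]; field_simp
    rw [this, Real.exp_log (by norm_num)]
  set g : ℝ → ℝ := fun t => t ^ c * (13 - 4 * t) / 36 with hg
  -- Lemma A : on the range, u n = g (n / 4^ℓ)
  have lemA : ∀ ℓ n : ℕ, 4 ^ ℓ ≤ n → n ≤ 2 * 4 ^ ℓ → u n = g ((n : ℝ) / 4 ^ ℓ) := by
    intro ℓ n h1 h2
    have h4p : (0:ℝ) < 4 ^ ℓ := by positivity
    have hn0 : (0:ℝ) ≤ (n : ℝ) / 4 ^ ℓ := by positivity
    have hsplit : (n : ℝ) ^ c = ((n : ℝ) / 4 ^ ℓ) ^ c * ((4:ℝ) ^ ℓ) ^ c := by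
      rw [← Real.mul_rpow hn0 (le_of_lt h4p)]
      rw [div_mul_cancel₀ _ (ne_of_gt h4p)]
    have h9l : ((4:ℝ) ^ ℓ) ^ c = 9 ^ ℓ := by
      rw [← Real.rpow_natCast 4 ℓ, ← Real.rpow_mul (by norm_num : (0:ℝ) ≤ 4),
        mul_comm, Real.rpow_mul (by norm_num : (0:ℝ) ≤ 4), h4c, Real.rpow_natCast]
    have h36 : (36:ℝ) ^ ℓ = 4 ^ ℓ * 9 ^ ℓ := by rw [← mul_pow]; norm_num
    rw [hu, hg]
    simp only
    rw [hV ℓ n h1 h2, hsplit, h9l]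
    have h9p : (0:ℝ) < 9 ^ ℓ := by positivity
    field_simp [pow_succ, h36]
    rw [pow_succ, h36]
    ring
  have hg1 : g 1 = 1 / 4 := by rw [hg]; simp [Real.one_rpow]; norm_num
  have hg2 : g 2 = 5 / 12 := by
    rw [hg]; simp only [h2c]; norm_num
  -- continuity of g on [1,2]
  have hgc : ContinuousOn g (Icc (1:ℝ) 2) := by
    apply ContinuousOn.div_const
    apply ContinuousOn.mul
    · intro x hx
      exact (Real.continuousAt_rpow_const x c (Or.inl (by linarith [hx.1]))).continuousWithinAt
    · fun_prop
  -- main cluster point fact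
  have key : ∀ y ∈ Icc (1/4 : ℝ) (5/12), MapClusterPt y atTop u := by
    intro y hy
    have hiv : y ∈ g '' Icc (1:ℝ) 2 := by
      apply intermediate_value_Icc (by norm_num : (1:ℝ) ≤ 2) hgc
      rw [hg1, hg2]; exact hy
    obtain ⟨x, hx, hgx⟩ := hiv
    have hx1 : (1:ℝ) ≤ x := hx.1
    have hx2 : x ≤ 2 := hx.2
    set φ : ℕ → ℕ := fun k => ⌊x * 4 ^ k⌋₊ with hφ
    have h4k : ∀ k : ℕ, (0:ℝ) < 4 ^ k := fun k => by positivity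
    have hφ1 : ∀ k, 4 ^ k ≤ φ k := by
      intro k
      rw [hφ]
      apply Nat.le_floor
      push_cast
      nlinarith [h4k k]
    have hφ2 : ∀ k, φ k ≤ 2 * 4 ^ k := by
      intro k
      have hle : x * 4 ^ k ≤ ((2 * 4 ^ k : ℕ) : ℝ) := by
        push_cast; nlinarith [h4k k]
      calc φ k ≤ ⌊((2 * 4 ^ k : ℕ) : ℝ)⌋₊ := Nat.floor_le_floor hle
        _ = 2 * 4 ^ k := Nat.floor_natCast _
    have hφtop : Tendsto φ atTop atTop :=
      tendsto_atTop_mono hφ1 (tendsto_pow_atTop_atTop_of_one_lt (by norm_num))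
    -- ratio tends to x
    have hlow : ∀ k, x - (1/4:ℝ) ^ k ≤ (φ k : ℝ) / 4 ^ k := by
      intro k
      rw [le_div_iff₀ (h4k k)]
      have h1 : x * 4 ^ k - 1 < (φ k : ℝ) := Nat.sub_one_lt_floor _
      have h2 : ((1/4:ℝ) ^ k) * 4 ^ k = 1 := by
        rw [← mul_pow]; norm_num
      nlinarith
    have hhigh : ∀ k, (φ k : ℝ) / 4 ^ k ≤ x := by
      intro k
      rw [div_le_iff₀ (h4k k)]
      exact Nat.floor_le (by nlinarith [h4k k])
    have hratio : Tendsto (fun k => (φ k : ℝ) / 4 ^ k) atTop (nhds x) := by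
      have hl : Tendsto (fun k : ℕ => x - (1/4:ℝ) ^ k) atTop (nhds x) := by
        have := tendsto_pow_atTop_nhds_zero_of_lt_one (by norm_num : (0:ℝ) ≤ 1/4)
          (by norm_num : (1/4:ℝ) < 1)
        simpa using tendsto_const_nhds.sub this
      exact tendsto_of_tendsto_of_tendsto_of_le_of_le hl tendsto_const_nhds hlow hhigh
    have hgcont : ContinuousAt g x := by
      apply ContinuousAt.div_const
      apply ContinuousAt.mul
      · exact Real.continuousAt_rpow_const x c (Or.inl (by linarith))
      · fun_prop
    have hcomp : Tendsto (u ∘ φ) atTop (nhds y) := by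
      have h1 : Tendsto (fun k => g ((φ k : ℝ) / 4 ^ k)) atTop (nhds (g x)) :=
        hgcont.tendsto.comp hratio
      rw [hgx] at h1
      refine h1.congr fun k => ?_
      exact (lemA k (φ k) (hφ1 k) (hφ2 k)).symm
    exact MapClusterPt.of_comp hφtop hcomp.mapClusterPt
  constructor
  · exact ⟨1/4, 5/12, by norm_num, key⟩
  · rintro ⟨L, hL⟩
    have e1 : (1/4 : ℝ) = L :=
      eq_of_nhds_neBot ((key _ (by norm_num)).clusterPt.mono hL)
    have e2 : (5/12 : ℝ) = L :=
      eq_of_nhds_neBot ((key _ (by norm_num)).clusterPt.mono hL)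
    linarith
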